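/- arXiv:1912.01090 — 2 statements merged into one kernel-verified Lean document; each statement's English description precedes it below -/
import Mathlib

section
/- For natural numbers n ≥ k ≥ 1, the quantity σ(k) - σ(n) + #([n] ∩ [n-k]) is non-negative; equivalently #([n] ∩ [n-k]) ≥ σ(n) - σ(k). -/
/-- Stirling numbers of the second kind. -/
def stirling2 : ℕ → ℕ → ℕ
  | 0, 0 => 1
  | 0, _ + 1 => 0
  | _ + 1, 0 => 0
  | n + 1, k + 1 => (k + 1) * stirling2 n (k + 1) + stirling2 n k

/-- Sum of base-2 digits. -/
def sigma2 (n : ℕ) : ℕ := (Nat.digits 2 n).sum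

/-- The set of powers of 2 appearing in the binary expansion of `n`. -/
def twoPows (n : ℕ) : Finset ℕ := (Nat.bitIndices n).toFinset.image (2 ^ ·)

private def I2 (n m : ℕ) : ℕ := ((Nat.bitIndices n).toFinset ∩ (Nat.bitIndices m).toFinset).card

private lemma succ_inj' : Function.Injective (fun x : ℕ => x + 1) := fun x y h => by simpa using h

private lemma toFinset_map' (l : List ℕ) (f : ℕ → ℕ) :
    (l.map f).toFinset = l.toFinset.image f := by
  ext x; simp

private lemma bits_two_mul (a : ℕ) :
    (Nat.bitIndices (2 * a)).toFinset = (Nat.bitIndices a).toFinset.image (· + 1) := by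
  rw [Nat.bitIndices_two_mul, toFinset_map']

private lemma bits_two_mul_add_one (a : ℕ) :
    (Nat.bitIndices (2 * a + 1)).toFinset
      = insert 0 ((Nat.bitIndices a).toFinset.image (· + 1)) := by
  rw [Nat.bitIndices_two_mul_add_one, List.toFinset_cons, toFinset_map']

private lemma zero_not_mem_image (S : Finset ℕ) : 0 ∉ S.image (· + 1) := by simp

private lemma sigma2_two_mul (a : ℕ) : sigma2 (2 * a) = sigma2 a := by
  rcases Nat.eq_zero_or_pos a with rfl | h
  · simp [sigma2]
  · unfold sigma2
    rw [Nat.digits_def' (by norm_num) (by omega : 0 < 2 * a)]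
    have h1 : (2 * a) % 2 = 0 := by omega
    have h2 : (2 * a) / 2 = a := by omega
    rw [h1, h2, List.sum_cons]
    simp

private lemma sigma2_two_mul_add_one (a : ℕ) : sigma2 (2 * a + 1) = sigma2 a + 1 := by
  unfold sigma2
  rw [Nat.digits_def' (by norm_num) (by omega : 0 < 2 * a + 1)]
  have h1 : (2 * a + 1) % 2 = 1 := by omega
  have h2 : (2 * a + 1) / 2 = a := by omega
  rw [h1, h2, List.sum_cons]
  omega

private lemma I2_00 (a b : ℕ) : I2 (2 * a) (2 * b) = I2 a b := by
  unfold I2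
  rw [bits_two_mul, bits_two_mul, ← Finset.image_inter _ _ succ_inj',
    Finset.card_image_of_injective _ succ_inj']

private lemma I2_01 (a b : ℕ) : I2 (2 * a) (2 * b + 1) = I2 a b := by
  unfold I2
  rw [bits_two_mul, bits_two_mul_add_one, Finset.inter_comm,
    Finset.insert_inter_of_notMem (zero_not_mem_image _), Finset.inter_comm,
    ← Finset.image_inter _ _ succ_inj', Finset.card_image_of_injective _ succ_inj']

private lemma I2_10 (a b : ℕ) : I2 (2 * a + 1) (2 * b) = I2 a b := by
  unfold I2
  rw [bits_two_mul, bits_two_mul_add_one,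
    Finset.insert_inter_of_notMem (zero_not_mem_image _),
    ← Finset.image_inter _ _ succ_inj', Finset.card_image_of_injective _ succ_inj']

private lemma I2_11 (a b : ℕ) : I2 (2 * a + 1) (2 * b + 1) = I2 a b + 1 := by
  unfold I2
  rw [bits_two_mul_add_one, bits_two_mul_add_one, ← Finset.insert_inter_distrib,
    Finset.card_insert_of_notMem (by
      intro h
      exact zero_not_mem_image _ (Finset.mem_of_mem_inter_left h)),
    ← Finset.image_inter _ _ succ_inj', Finset.card_image_of_injective _ succ_inj']

private lemma key (n : ℕ) :
    (∀ m, m ≤ n → sigma2 n ≤ sigma2 (n - m) + I2 n m) ∧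
    (∀ m, m < n → sigma2 n ≤ sigma2 (n - m - 1) + I2 n m + 1) := by
  induction n using Nat.strong_induction_on with
  | _ n IH =>
  rcases Nat.eq_zero_or_pos n with rfl | hn
  · exact ⟨fun m hm => by interval_cases m; simp, fun m hm => by omega⟩
  obtain ⟨a, rfl | rfl⟩ : ∃ a, n = 2 * a ∨ n = 2 * a + 1 := ⟨n / 2, by omega⟩
  · obtain ⟨Pa, Qa⟩ := IH a (by omega)
    constructor
    · intro m hm
      obtain ⟨b, rfl | rfl⟩ : ∃ b, m = 2 * b ∨ m = 2 * b + 1 := ⟨m / 2, by omega⟩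
      · have hba : b ≤ a := by omega
        have h1 : 2 * a - 2 * b = 2 * (a - b) := by omega
        rw [h1, sigma2_two_mul, sigma2_two_mul, I2_00]
        exact Pa b hba
      · have hba : b < a := by omega
        have h1 : 2 * a - (2 * b + 1) = 2 * (a - b - 1) + 1 := by omega
        rw [h1, sigma2_two_mul, sigma2_two_mul_add_one, I2_01]
        have := Qa b hba
        omega
    · intro m hm
      obtain ⟨b, rfl | rfl⟩ : ∃ b, m = 2 * b ∨ m = 2 * b + 1 := ⟨m / 2, by omega⟩
      · have hba : b < a := by omega
        have h1 : 2 * a - 2 * b - 1 = 2 * (a - b - 1) + 1 := by omega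
        rw [h1, sigma2_two_mul, sigma2_two_mul_add_one, I2_00]
        have := Qa b hba
        omega
      · have hba : b < a := by omega
        have h1 : 2 * a - (2 * b + 1) - 1 = 2 * (a - b - 1) := by omega
        rw [h1, sigma2_two_mul, sigma2_two_mul, I2_01]
        have := Qa b hba
        omega
  · obtain ⟨Pa, Qa⟩ := IH a (by omega)
    constructor
    · intro m hm
      obtain ⟨b, rfl | rfl⟩ : ∃ b, m = 2 * b ∨ m = 2 * b + 1 := ⟨m / 2, by omega⟩
      · have hba : b ≤ a := by omega
        have h1 : 2 * a + 1 - 2 * b = 2 * (a - b) + 1 := by omega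
        rw [h1, sigma2_two_mul_add_one, sigma2_two_mul_add_one, I2_10]
        have := Pa b hba
        omega
      · have hba : b ≤ a := by omega
        have h1 : 2 * a + 1 - (2 * b + 1) = 2 * (a - b) := by omega
        rw [h1, sigma2_two_mul_add_one, sigma2_two_mul, I2_11]
        have := Pa b hba
        omega
    · intro m hm
      obtain ⟨b, rfl | rfl⟩ : ∃ b, m = 2 * b ∨ m = 2 * b + 1 := ⟨m / 2, by omega⟩
      · have hba : b ≤ a := by omega
        have h1 : 2 * a + 1 - 2 * b - 1 = 2 * (a - b) := by omega
        rw [h1, sigma2_two_mul_add_one, sigma2_two_mul, I2_10]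
        have := Pa b hba
        omega
      · have hba : b < a := by omega
        have h1 : 2 * a + 1 - (2 * b + 1) - 1 = 2 * (a - b - 1) + 1 := by omega
        rw [h1, sigma2_two_mul_add_one, sigma2_two_mul_add_one, I2_11]
        have := Qa b hba
        omega

private lemma twoPows_inter_card (n m : ℕ) :
    (twoPows n ∩ twoPows m).card = I2 n m := by
  have hinj : Function.Injective (2 ^ · : ℕ → ℕ) :=
    Nat.pow_right_injective (le_refl 2)
  unfold twoPows I2
  rw [← Finset.image_inter _ _ hinj, Finset.card_image_of_injective _ hinj]

theorem stmt_9 (n k : ℕ) (hk : 1 ≤ k) (hkn : k ≤ n) :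
    (0 : ℤ) ≤ (sigma2 k : ℤ) - sigma2 n + (twoPows n ∩ twoPows (n - k)).card := by
  have h := (key n).1 (n - k) (Nat.sub_le _ _)
  rw [Nat.sub_sub_self hkn] at h
  rw [twoPows_inter_card]
  omega
end

section
/- For n ≥ k ≥ 1, the Stirling number S(n,k) is odd if and only if #([n] ∩ [n-k]) = σ(n) - σ(k) and ν(S(n,k)) = σ(k) - σ(n) + #([n] ∩ [n-k]). -/
/-! ### bit arithmetic helpers -/

theorem land_bit (r s x y : ℕ) (hr : r < 2) (hs : s < 2) :
    (2*x + r) &&& (2*y + s) = 2*(x &&& y) + (r &&& s) := by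
  have hrs : r &&& s < 2 := by interval_cases r <;> interval_cases s <;> decide
  apply Nat.eq_of_testBit_eq
  intro i
  cases i with
  | zero =>
      simp only [Nat.testBit_zero, Nat.and_mod_two_eq_one, Nat.mul_add_mod]
  | succ j =>
      simp only [Nat.testBit_add_one, Nat.and_div_two]
      rw [Nat.mul_add_div (by norm_num), Nat.mul_add_div (by norm_num),
        Nat.mul_add_div (by norm_num), Nat.div_eq_of_lt hr, Nat.div_eq_of_lt hs,
        Nat.div_eq_of_lt hrs]
      simp [Nat.and_div_two]

theorem land_bit_zero (r s x y : ℕ) (hr : r < 2) (hs : s < 2) :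
    (2*x + r) &&& (2*y + s) = 0 ↔ (x &&& y = 0 ∧ r &&& s = 0) := by
  rw [land_bit r s x y hr hs]; omega

theorem sigma2_zero : sigma2 0 = 0 := by simp [sigma2]

theorem sigma2_bit (r m : ℕ) (hr : r < 2) : sigma2 (2*m + r) = sigma2 m + r := by
  rcases Nat.eq_zero_or_pos (2*m + r) with h | h
  · have hm : m = 0 := by omega
    have hr0 : r = 0 := by omega
    subst hm; subst hr0; rfl
  · unfold sigma2
    rw [Nat.digits_def' (by norm_num : 1 < 2) h]
    rw [Nat.mul_add_mod, Nat.mod_eq_of_lt hr, Nat.mul_add_div (by norm_num),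
      Nat.div_eq_of_lt hr]
    simp [Nat.add_comm]

/-! ### parity of binomial coefficients (Kummer mod 2) -/

theorem choose_parity : ∀ x y : ℕ, (x + y).choose x % 2 = if x &&& y = 0 then 1 else 0
  | x, y => by
    rcases Nat.eq_zero_or_pos x with rfl | hx
    · simp [Nat.zero_and]
    rcases Nat.eq_zero_or_pos y with rfl | hy
    · simp [Nat.and_zero, Nat.choose_self]
    obtain ⟨x', r, hr, rfl⟩ : ∃ a r, r < 2 ∧ x = 2*a + r :=
      ⟨x/2, x%2, Nat.mod_lt _ two_pos, (Nat.div_add_mod x 2).symm⟩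
    obtain ⟨y', s, hs, rfl⟩ : ∃ a s, s < 2 ∧ y = 2*a + s :=
      ⟨y/2, y%2, Nat.mod_lt _ two_pos, (Nat.div_add_mod y 2).symm⟩
    have hL := (Choose.choose_modEq_choose_mod_mul_choose_div_nat
      (p := 2) (n := (2*x' + r) + (2*y' + s)) (k := 2*x' + r))
    have hL' : ((2*x' + r) + (2*y' + s)).choose (2*x' + r) % 2 =
        (((2*x' + r) + (2*y' + s)) % 2).choose ((2*x' + r) % 2) *
          ((((2*x' + r) + (2*y' + s)) / 2).choose ((2*x' + r) / 2)) % 2 := hL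
    simp only [land_bit_zero r s x' y' hr hs]
    interval_cases r <;> interval_cases s
    · -- r = 0, s = 0
      have h1 : (2*x' + 0) + (2*y' + 0) = 2*(x'+y') + 0 := by ring
      rw [h1] at hL' ⊢
      rw [hL']
      have e1 : (2*(x'+y') + 0) % 2 = 0 := by omega
      have e2 : (2*(x'+y') + 0) / 2 = x' + y' := by omega
      have e3 : (2*x' + 0) % 2 = 0 := by omega
      have e4 : (2*x' + 0) / 2 = x' := by omega
      rw [e1, e2, e3, e4, Nat.choose_zero_right, one_mul, choose_parity x' y']
      simp
    · have h1 : (2*x' + 0) + (2*y' + 1) = 2*(x'+y') + 1 := by ring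
      rw [h1] at hL' ⊢
      rw [hL']
      have e1 : (2*(x'+y') + 1) % 2 = 1 := by omega
      have e2 : (2*(x'+y') + 1) / 2 = x' + y' := by omega
      have e3 : (2*x' + 0) % 2 = 0 := by omega
      have e4 : (2*x' + 0) / 2 = x' := by omega
      rw [e1, e2, e3, e4]
      rw [show (1:ℕ).choose 0 = 1 from rfl, one_mul, choose_parity x' y']
      simp
    · have h1 : (2*x' + 1) + (2*y' + 0) = 2*(x'+y') + 1 := by ring
      rw [h1] at hL' ⊢
      rw [hL']
      have e1 : (2*(x'+y') + 1) % 2 = 1 := by omega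
      have e2 : (2*(x'+y') + 1) / 2 = x' + y' := by omega
      have e3 : (2*x' + 1) % 2 = 1 := by omega
      have e4 : (2*x' + 1) / 2 = x' := by omega
      rw [e1, e2, e3, e4]
      rw [show (1:ℕ).choose 1 = 1 from rfl, one_mul, choose_parity x' y']
      simp
    · have h1 : (2*x' + 1) + (2*y' + 1) = 2*(x'+y'+1) + 0 := by ring
      rw [h1] at hL' ⊢
      rw [hL']
      have e1 : (2*(x'+y'+1) + 0) % 2 = 0 := by omega
      have e3 : (2*x' + 1) % 2 = 1 := by omega
      rw [e1, e3]
      rw [show (0:ℕ).choose 1 = 0 from rfl, zero_mul]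
      simp
termination_by x y => x + y
decreasing_by all_goals omega

/-! ### basic stirling2 facts -/

theorem stirling2_self : ∀ n, stirling2 n n = 1 := by
  intro n
  induction n with
  | zero => rfl
  | succ m ih =>
      have hz : ∀ j, ∀ i, j < i → stirling2 j i = 0 := by
        intro j
        induction j with
        | zero => intro i hi; match i, hi with | i+1, _ => rfl
        | succ l ihl =>
            intro i hi
            match i, hi with
            | i+1, hi =>
              show (i + 1) * stirling2 l (i + 1) + stirling2 l i = 0
              rw [ihl (i+1) (by omega), ihl i (by omega)]
              ring
      show (m + 1) * stirling2 m (m + 1) + stirling2 m m = 1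
      rw [hz m (m+1) (by omega), ih]
      ring

theorem stirling2_eq_zero : ∀ n i, n < i → stirling2 n i = 0 := by
  intro n
  induction n with
  | zero => intro i hi; match i, hi with | i+1, _ => rfl
  | succ l ihl =>
      intro i hi
      match i, hi with
      | i+1, hi =>
        show (i + 1) * stirling2 l (i + 1) + stirling2 l i = 0
        rw [ihl (i+1) (by omega), ihl i (by omega)]
        ring

theorem stirling2_pos : ∀ n k, 1 ≤ k → k ≤ n → 0 < stirling2 n k := by
  intro n
  induction n with
  | zero => intro k h1 h2; omega
  | succ m ih =>
      intro k h1 h2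
      match k, h1 with
      | j+1, _ =>
        show 0 < (j + 1) * stirling2 m (j + 1) + stirling2 m j
        rcases Nat.eq_zero_or_pos j with rfl | hj
        · rcases Nat.eq_zero_or_pos m with rfl | hm
          · simp [stirling2]
          · have := ih 1 le_rfl hm
            simp only [Nat.zero_add]
            omega
        · have := ih j hj (by omega)
          omega

theorem stirling2_zero_right (p : ℕ) : stirling2 (p+1) 0 = 0 := rfl

theorem stirling2_parity : ∀ n, ∀ k, 1 ≤ k → k ≤ n →
    stirling2 n k % 2 = if (n - k) &&& ((k - 1)/2) = 0 then 1 else 0 := by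
  intro n
  induction n with
  | zero => intro k h1 h2; omega
  | succ N ih =>
    intro k h1 h2
    match k, h1 with
    | j+1, _ =>
      rcases eq_or_lt_of_le h2 with heq | hlt
      · have hj : j = N := by omega
        subst hj
        rw [stirling2_self]
        simp [Nat.sub_self, Nat.zero_and]
      · have hjm : j + 1 ≤ N := by omega
        show ((j + 1) * stirling2 N (j + 1) + stirling2 N j) % 2 = _
        rcases Nat.even_or_odd j with hj | hj
        · -- j even, k = j+1 odd
          obtain ⟨b, hb⟩ := hj
          rcases Nat.eq_zero_or_pos b with rfl | hbpos
          · -- j = 0, k = 1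
            have hj0 : j = 0 := by omega
            subst hj0
            obtain ⟨p, rfl⟩ : ∃ p, N = p + 1 := ⟨N-1, by omega⟩
            have h0 : stirling2 (p+1) 0 = 0 := rfl
            have hS := ih 1 le_rfl (by omega)
            simp only [Nat.zero_add, h0, Nat.add_zero, Nat.one_mul]
            rw [hS]
            simp [Nat.and_zero]
          · -- j = 2b, b ≥ 1
            obtain ⟨b', rfl⟩ : ∃ b', b = b' + 1 := ⟨b-1, by omega⟩
            obtain ⟨m', hm'⟩ : ∃ m', N - j = m' + 1 := ⟨N - j - 1, by omega⟩
            have hS1 := ih (j+1) (by omega) (by omega)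
            have hS2 := ih j (by omega) (by omega)
            have e1 : N - (j+1) = m' := by omega
            have e2 : (j + 1 - 1)/2 = b' + 1 := by omega
            have e3 : (j - 1)/2 = b' := by omega
            have e5 : N + 1 - (j + 1) = m' + 1 := by omega
            rw [e1, e2] at hS1
            rw [hm', e3] at hS2
            rw [e5, e2]
            have hj1 : (j + 1) % 2 = 1 := by omega
            have hadd : ((j + 1) * stirling2 N (j + 1) + stirling2 N j) % 2
                = (stirling2 N (j+1) % 2 + stirling2 N j % 2) % 2 := by
              rw [Nat.add_mod, Nat.mul_mod, hj1, Nat.one_mul]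
              omega
            rw [hadd, hS1, hS2]
            rw [← choose_parity (m'+1) (b'+1), ← choose_parity m' (b'+1),
              ← choose_parity (m'+1) b']
            have p1 : m' + 1 + (b' + 1) = (m' + (b' + 1)) + 1 := by ring
            rw [p1, Nat.choose_succ_succ']
            have p2 : m' + 1 + b' = m' + (b' + 1) := by ring
            rw [p2]
            exact (Nat.add_mod _ _ 2).symm
        · -- j odd, k = j+1 even
          obtain ⟨b, hb⟩ := hj
          have hS2 := ih j (by omega) (by omega)
          have e1 : N + 1 - (j+1) = N - j := by omega
          have e2 : (j + 1 - 1)/2 = b := by omega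
          have e3 : (j - 1)/2 = b := by omega
          have hj1 : (j + 1) % 2 = 0 := by omega
          have hadd : ((j + 1) * stirling2 N (j + 1) + stirling2 N j) % 2
              = stirling2 N j % 2 := by
            rw [Nat.add_mod, Nat.mul_mod, hj1, Nat.zero_mul]
            omega
          rw [hadd, hS2, e3, e1, e2]

theorem sigma_main : ∀ a k : ℕ,
    (a &&& (k/2) = 0 ∨ a &&& ((k-1)/2) = 0) →
    sigma2 (a + k) = sigma2 k + sigma2 ((a + k) &&& a)
  | a, k => by
    intro hD
    rcases Nat.eq_zero_or_pos a with rfl | ha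
    · rw [Nat.zero_add, Nat.and_zero, sigma2_zero]
      omega
    rcases Nat.eq_zero_or_pos k with rfl | hk
    · rw [Nat.add_zero, Nat.and_self, sigma2_zero]
      omega
    obtain ⟨a', r, hr, rfl⟩ : ∃ u v, v < 2 ∧ a = 2*u + v :=
      ⟨a/2, a%2, Nat.mod_lt _ two_pos, (Nat.div_add_mod a 2).symm⟩
    obtain ⟨k', s, hs, rfl⟩ : ∃ u v, v < 2 ∧ k = 2*u + v :=
      ⟨k/2, k%2, Nat.mod_lt _ two_pos, (Nat.div_add_mod k 2).symm⟩
    have split : ∀ K, (2*a' + r) &&& K = 0 → a' &&& (K/2) = 0 ∧ r &&& (K%2) = 0 := by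
      intro K hak
      rw [← Nat.div_add_mod K 2] at hak
      exact (land_bit_zero r (K%2) a' (K/2) hr (Nat.mod_lt _ two_pos)).mp hak
    interval_cases s
    · -- k = 2k', k' ≥ 1
      have hk' : 1 ≤ k' := by omega
      have hIH : a' &&& (k'/2) = 0 ∨ a' &&& ((k'-1)/2) = 0 := by
        rcases hD with h | h
        · rw [show (2*k'+0)/2 = k' from by omega] at h
          exact Or.inl (split k' h).1
        · rw [show (2*k'+0-1)/2 = k'-1 from by omega] at h
          exact Or.inr (split (k'-1) h).1
      have IH := sigma_main a' k' hIH
      rw [show 2*a'+r + (2*k'+0) = 2*(a'+k') + r from by ring]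
      rw [land_bit r r (a'+k') a' hr hr]
      rw [show r &&& r = r from by interval_cases r <;> rfl]
      rw [sigma2_bit r _ hr, sigma2_bit 0 _ (by norm_num), sigma2_bit r _ hr]
      omega
    · -- k = 2k'+1
      have hK : (2*a'+r) &&& k' = 0 := by
        rcases hD with h | h
        · rwa [show (2*k'+1)/2 = k' from by omega] at h
        · rwa [show (2*k'+1-1)/2 = k' from by omega] at h
      have hsp := split k' hK
      interval_cases r
      · have IH := sigma_main a' k' (Or.inl hsp.1)
        rw [show 2*a'+0 + (2*k'+1) = 2*(a'+k') + 1 from by ring]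
        rw [land_bit 1 0 (a'+k') a' (by norm_num) (by norm_num)]
        rw [show (1:ℕ) &&& 0 = 0 from rfl]
        rw [sigma2_bit 1 _ (by norm_num), sigma2_bit 1 _ (by norm_num),
          sigma2_bit 0 _ (by norm_num)]
        omega
      · -- a, k both odd
        have hk'e : k' % 2 = 0 := by
          rcases Nat.mod_two_eq_zero_or_one k' with h | h
          · exact h
          · rw [h] at hsp
            exact absurd hsp.2 (by decide)
        have hIH : a' &&& ((k'+1)/2) = 0 ∨ a' &&& ((k'+1-1)/2) = 0 := by
          refine Or.inl ?_
          rw [show (k'+1)/2 = k'/2 from by omega]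
          exact hsp.1
        have IH := sigma_main a' (k'+1) hIH
        rw [show a' + (k'+1) = a' + k' + 1 from by ring] at IH
        have ek1 : sigma2 (k'+1) = sigma2 (k'/2) + 1 := by
          rw [show k' + 1 = 2*(k'/2) + 1 from by omega]
          exact sigma2_bit 1 _ (by norm_num)
        have ek0 : sigma2 k' = sigma2 (k'/2) := by
          conv_lhs => rw [show k' = 2*(k'/2) + 0 from by omega]
          rw [sigma2_bit 0 _ (by norm_num)]
          omega
        rw [show 2*a'+1 + (2*k'+1) = 2*(a'+k'+1) + 0 from by ring]
        rw [land_bit 0 1 (a'+k'+1) a' (by norm_num) (by norm_num)]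
        rw [show (0:ℕ) &&& 1 = 0 from rfl]
        rw [sigma2_bit 0 _ (by norm_num), sigma2_bit 1 _ (by norm_num),
          sigma2_bit 0 _ (by norm_num)]
        omega
termination_by a k => a + k
decreasing_by all_goals omega

theorem mem_bitIndices : ∀ n i : ℕ, i ∈ Nat.bitIndices n ↔ n.testBit i
  | n, i => by
    rcases Nat.eq_zero_or_pos n with rfl | hn
    · simp
    obtain ⟨m, r, hr, rfl⟩ : ∃ u v, v < 2 ∧ n = 2*u + v :=
      ⟨n/2, n%2, Nat.mod_lt _ two_pos, (Nat.div_add_mod n 2).symm⟩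
    interval_cases r
    · rw [show 2*m+0 = 2*m from by ring, Nat.bitIndices_two_mul]
      cases i with
      | zero =>
          simp only [List.mem_map, Nat.testBit_zero]
          constructor
          · rintro ⟨x, -, hx⟩; omega
          · intro h
            exfalso
            have : (2*m) % 2 = 1 := by simpa using h
            omega
      | succ j =>
          rw [Nat.testBit_add_one, Nat.mul_div_cancel_left _ (by norm_num : 0 < 2)]
          rw [← mem_bitIndices m j]
          simp only [List.mem_map]
          constructor
          · rintro ⟨x, hx, h⟩
            have : x = j := by omega
            exact this ▸ hx
          · intro h; exact ⟨j, h, rfl⟩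
    · rw [show 2*m+1 = 2*m+1 from rfl, Nat.bitIndices_two_mul_add_one]
      cases i with
      | zero =>
          simp only [List.mem_cons, Nat.testBit_zero]
          constructor
          · intro _
            simp only [decide_eq_true_eq]
            omega
          · intro _
            exact Or.inl trivial
      | succ j =>
          rw [Nat.testBit_add_one]
          rw [show (2*m+1)/2 = m from by omega]
          rw [← mem_bitIndices m j]
          simp only [List.mem_cons, List.mem_map]
          constructor
          · rintro (h | ⟨x, hx, h⟩)
            · omega
            · have : x = j := by omega
              exact this ▸ hx
          · intro h; exact Or.inr ⟨j, h, rfl⟩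
termination_by n _ => n
decreasing_by all_goals omega

theorem length_bitIndices : ∀ n : ℕ, (Nat.bitIndices n).length = sigma2 n
  | n => by
    rcases Nat.eq_zero_or_pos n with rfl | hn
    · simp [sigma2_zero]
    obtain ⟨m, r, hr, rfl⟩ : ∃ u v, v < 2 ∧ n = 2*u + v :=
      ⟨n/2, n%2, Nat.mod_lt _ two_pos, (Nat.div_add_mod n 2).symm⟩
    interval_cases r
    · rw [show 2*m+0 = 2*m from by ring, Nat.bitIndices_two_mul, List.length_map,
        length_bitIndices m, show 2*m = 2*m+0 from rfl, sigma2_bit 0 m (by norm_num)]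
      omega
    · rw [Nat.bitIndices_two_mul_add_one, List.length_cons, List.length_map,
        length_bitIndices m, sigma2_bit 1 m (by norm_num)]
termination_by n => n
decreasing_by all_goals omega

theorem card_twoPows (n : ℕ) : (twoPows n).card = sigma2 n := by
  rw [twoPows, Finset.card_image_of_injective _ (Nat.pow_right_injective le_rfl),
    List.card_toFinset, (Nat.bitIndices_sorted (n := n)).nodup.dedup, length_bitIndices]

theorem twoPows_inter (x y : ℕ) : twoPows x ∩ twoPows y = twoPows (x &&& y) := by
  ext z
  simp only [twoPows, Finset.mem_inter, Finset.mem_image, List.mem_toFinset,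
    mem_bitIndices, Nat.testBit_and]
  constructor
  · rintro ⟨⟨i, hx, hi⟩, ⟨j, hy, hj⟩⟩
    have hij : i = j := Nat.pow_right_injective le_rfl (hi.trans hj.symm)
    subst hij
    exact ⟨i, by rw [hx, hy]; rfl, hi⟩
  · rintro ⟨i, h, hi⟩
    rw [Bool.and_eq_true] at h
    exact ⟨⟨i, h.1, hi⟩, ⟨i, h.2, hi⟩⟩

theorem stmt_18 (n k : ℕ) (hk : 1 ≤ k) (hkn : k ≤ n) :
    Odd (stirling2 n k) ↔
      ((twoPows n ∩ twoPows (n - k)).card : ℤ) = (sigma2 n : ℤ) - sigma2 k ∧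
        (padicValNat 2 (stirling2 n k) : ℤ) =
          (sigma2 k : ℤ) - sigma2 n + (twoPows n ∩ twoPows (n - k)).card := by
  have hpos := stirling2_pos n k hk hkn
  have hparity := stirling2_parity n k hk hkn
  have hodd : Odd (stirling2 n k) ↔ (n - k) &&& ((k - 1)/2) = 0 := by
    rw [Nat.odd_iff, hparity]
    by_cases h : (n - k) &&& ((k - 1)/2) = 0
    · simp [h]
    · simp [h]
  have hcard : (twoPows n ∩ twoPows (n - k)).card = sigma2 (n &&& (n - k)) := by
    rw [twoPows_inter, card_twoPows]
  constructor
  · intro h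
    have hb := hodd.mp h
    have hmain := sigma_main (n - k) k (Or.inr hb)
    rw [Nat.sub_add_cancel hkn] at hmain
    -- hmain : sigma2 n = sigma2 k + sigma2 (n &&& (n - k))
    have hndvd : ¬ (2 ∣ stirling2 n k) := by
      have := Nat.odd_iff.mp h
      omega
    have hval : padicValNat 2 (stirling2 n k) = 0 :=
      padicValNat.eq_zero_of_not_dvd hndvd
    constructor
    · rw [hcard]; omega
    · rw [hval, hcard]; push_cast; omega
  · rintro ⟨h1, h2⟩
    have hval : padicValNat 2 (stirling2 n k) = 0 := by omega
    have hndvd : ¬ (2 ∣ stirling2 n k) := by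
      rcases (padicValNat.eq_zero_iff).mp hval with h | h | h
      · omega
      · omega
      · exact h
    exact Nat.odd_iff.mpr (by omega)
end
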